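/- For all real numbers a and b, ∫_{-∞}^{∞} t² φ(t) Φ(a + b t) dt = Φ(a/√(1 + b²)) − (a b²/(1 + b²)^{3/2}) φ(a/√(1 + b²)). -/

import Mathlib

open MeasureTheory Set

/-- Standard normal density. -/
noncomputable def phi (t : ℝ) : ℝ := Real.exp (-(t ^ 2) / 2) / Real.sqrt (2 * Real.pi)

/-- Standard normal cumulative distribution function. -/
noncomputable def Phi (x : ℝ) : ℝ := ∫ t in Set.Iic x, phi t

open Filter Topology

lemma sqrt2pi_pos : 0 < Real.sqrt (2 * Real.pi) := Real.sqrt_pos.2 (by positivity)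

lemma phi_eq (t : ℝ) : phi t = (Real.sqrt (2 * Real.pi))⁻¹ * Real.exp (-(1/2) * t ^ 2) := by
  rw [phi, div_eq_inv_mul]
  ring_nf

lemma phi_nonneg (t : ℝ) : 0 ≤ phi t := div_nonneg (Real.exp_pos _).le (Real.sqrt_nonneg _)

lemma continuous_phi : Continuous phi := by unfold phi; fun_prop

lemma integrable_phi : Integrable phi := by
  rw [funext phi_eq]
  exact (integrable_exp_neg_mul_sq (by norm_num : (0:ℝ) < 1/2)).const_mul _

lemma sq_mul_exp_le (x : ℝ) :
    x ^ 2 * Real.exp (-(x ^ 2) / 2) ≤ 4 * Real.exp (-(1/4) * x ^ 2) := by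
  have h1 : x ^ 2 / 4 ≤ Real.exp (x ^ 2 / 4) := by
    nlinarith [Real.add_one_le_exp (x ^ 2 / 4)]
  have h3 : Real.exp (x ^ 2 / 4) * Real.exp (-(x ^ 2) / 2) = Real.exp (-(1/4) * x ^ 2) := by
    rw [← Real.exp_add]; ring_nf
  nlinarith [Real.exp_pos (-(x^2)/2), Real.exp_pos (x^2/4)]

lemma integrable_sq_phi : Integrable (fun x : ℝ => x ^ 2 * phi x) := by
  have hg : Integrable (fun x : ℝ => 4 * Real.exp (-(1/4) * x ^ 2) / Real.sqrt (2 * Real.pi)) :=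
    ((integrable_exp_neg_mul_sq (by norm_num : (0:ℝ) < 1/4)).const_mul 4).div_const _
  refine hg.mono' ((continuous_pow 2).mul continuous_phi).aestronglyMeasurable ?_
  refine ae_of_all _ fun x => ?_
  rw [Real.norm_eq_abs, abs_of_nonneg (mul_nonneg (sq_nonneg x) (phi_nonneg x)), phi,
    mul_div_assoc']
  exact (div_le_div_iff_of_pos_right sqrt2pi_pos).2 (sq_mul_exp_le x)

lemma integrable_mul_phi : Integrable (fun x : ℝ => x * phi x) := by
  refine (integrable_sq_phi.add integrable_phi).mono'
    (continuous_id.mul continuous_phi).aestronglyMeasurable (ae_of_all _ fun x => ?_)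
  rw [Real.norm_eq_abs, abs_mul, abs_of_nonneg (phi_nonneg x)]
  simp only [Pi.add_apply]
  have h1 : |x| ≤ x ^ 2 + 1 := by nlinarith [abs_nonneg x, sq_abs x]
  calc |x| * phi x ≤ (x ^ 2 + 1) * phi x := mul_le_mul_of_nonneg_right h1 (phi_nonneg x)
    _ = x ^ 2 * phi x + phi x := by ring

lemma integral_phi : ∫ x, phi x = 1 := by
  rw [funext phi_eq, integral_const_mul, integral_gaussian,
    show Real.pi / (1/2) = 2 * Real.pi by ring]
  exact inv_mul_cancel₀ (ne_of_gt sqrt2pi_pos)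

lemma hasDerivAt_phi (x : ℝ) : HasDerivAt phi (-x * phi x) x := by
  have h1 : HasDerivAt (fun t : ℝ => -(t ^ 2) / 2) (-x) x := by
    have := ((hasDerivAt_pow 2 x).neg).div_const 2
    refine this.congr_deriv ?_
    push_cast
    ring
  have h2 := (h1.exp).div_const (Real.sqrt (2 * Real.pi))
  show HasDerivAt (fun t => Real.exp (-(t ^ 2) / 2) / Real.sqrt (2 * Real.pi)) _ x
  refine h2.congr_deriv ?_
  rw [phi]
  ring

lemma hasDerivAt_Phi (x : ℝ) : HasDerivAt Phi (phi x) x := by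
  have key : Phi = fun y => Phi 0 + ∫ t in (0:ℝ)..y, phi t := by
    funext y
    rw [← intervalIntegral.integral_Iic_sub_Iic integrable_phi.integrableOn integrable_phi.integrableOn]
    show Phi y = Phi 0 + (Phi y - Phi 0)
    ring
  rw [key]
  have h := intervalIntegral.integral_hasDerivAt_right
    (integrable_phi.intervalIntegrable : IntervalIntegrable phi volume 0 x)
    continuous_phi.stronglyMeasurable.stronglyMeasurableAtFilter
    continuous_phi.continuousAt
  exact h.const_add _

lemma continuous_Phi : Continuous Phi :=
  continuous_iff_continuousAt.2 fun x => (hasDerivAt_Phi x).continuousAt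

lemma Phi_nonneg (x : ℝ) : 0 ≤ Phi x :=
  setIntegral_nonneg measurableSet_Iic fun t _ => phi_nonneg t

lemma Phi_le_one (x : ℝ) : Phi x ≤ 1 := by
  rw [← integral_phi]
  exact setIntegral_le_integral integrable_phi (ae_of_all _ phi_nonneg)

lemma tendsto_Phi_atTop : Tendsto Phi atTop (𝓝 1) := by
  have h := tendsto_setIntegral_of_monotone (f := phi) (μ := volume)
    (s := fun i : ℝ => Iic i) (fun i => measurableSet_Iic)
    (fun i j hij => Iic_subset_Iic.2 hij)
    (by rw [iUnion_Iic]; exact integrable_phi.integrableOn)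
  rw [iUnion_Iic, setIntegral_univ, integral_phi] at h
  exact h

lemma tendsto_Phi_atBot : Tendsto Phi atBot (𝓝 0) := by
  have h := tendsto_setIntegral_of_antitone (f := phi) (μ := volume)
    (s := fun i : ℝ => Iic (-i)) (fun i => measurableSet_Iic)
    (fun i j hij => Iic_subset_Iic.2 (neg_le_neg hij))
    ⟨0, integrable_phi.integrableOn⟩
  have hI : ⋂ i : ℝ, Iic (-i) = (∅ : Set ℝ) := by
    ext x
    simp only [mem_iInter, mem_Iic, mem_empty_iff_false, iff_false, not_forall, not_le]
    exact ⟨-(x - 1), by linarith⟩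
  rw [hI] at h
  simp only [Measure.restrict_empty, integral_zero_measure] at h
  have h2 := h.comp tendsto_neg_atBot_atTop
  have : (fun i : ℝ => Phi (-i)) ∘ (fun x : ℝ => -x) = Phi := by
    funext x; simp [Function.comp]
  rwa [show ((fun i : ℝ => ∫ (x : ℝ) in Iic (-i), phi x) ∘ fun x : ℝ => -x) = Phi by
    funext x; simp [Function.comp, Phi]] at h2

lemma phi_bound {x : ℝ} (hx : 1 ≤ |x|) : phi x ≤ 2 / x ^ 2 := by
  have hx0 : 0 < x ^ 2 := by nlinarith [abs_nonneg x, sq_abs x]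
  have h1 : x ^ 2 / 2 ≤ Real.exp (x ^ 2 / 2) := by
    nlinarith [Real.add_one_le_exp (x ^ 2 / 2)]
  have hS : (1:ℝ) ≤ Real.sqrt (2 * Real.pi) := by
    rw [show (1:ℝ) = Real.sqrt 1 by simp]
    exact Real.sqrt_le_sqrt (by nlinarith [Real.pi_gt_three])
  have h2 : phi x ≤ Real.exp (-(x ^ 2) / 2) := by
    rw [phi]
    exact div_le_self (Real.exp_pos _).le hS
  have h3 : Real.exp (-(x ^ 2) / 2) = (Real.exp (x ^ 2 / 2))⁻¹ := by
    rw [← Real.exp_neg]; ring_nf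
  have h4 : (Real.exp (x ^ 2 / 2))⁻¹ ≤ (x ^ 2 / 2)⁻¹ := by
    apply inv_anti₀ (by positivity) h1
  calc phi x ≤ (Real.exp (x ^ 2 / 2))⁻¹ := by rw [← h3]; exact h2
    _ ≤ (x ^ 2 / 2)⁻¹ := h4
    _ = 2 / x ^ 2 := by rw [inv_div]

lemma tendsto_mul_phi {l : Filter ℝ} (hl : Tendsto (fun x : ℝ => |x|) l atTop) :
    Tendsto (fun x => x * phi x) l (𝓝 0) := by
  have hg : Tendsto (fun x : ℝ => 2 * |x|⁻¹) l (𝓝 (2 * 0)) :=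
    (tendsto_inv_atTop_zero.comp hl).const_mul 2
  rw [mul_zero] at hg
  refine squeeze_zero_norm' ?_ hg
  filter_upwards [hl.eventually_ge_atTop 1] with x hx
  rw [Real.norm_eq_abs, abs_mul, abs_of_nonneg (phi_nonneg x)]
  have h1 := phi_bound hx
  have hx2 : x ^ 2 = |x| ^ 2 := (sq_abs x).symm
  have hxpos : 0 < |x| := lt_of_lt_of_le one_pos hx
  calc |x| * phi x ≤ |x| * (2 / x ^ 2) := by
        exact mul_le_mul_of_nonneg_left h1 (abs_nonneg x)
    _ = 2 * |x|⁻¹ := by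
        have hxx : x ≠ 0 := by
          intro h
          rw [h] at hxpos
          simp at hxpos
        field_simp [hxx]
        linear_combination (sq_abs x)

lemma tendsto_phi {l : Filter ℝ} (hl : Tendsto (fun x : ℝ => |x|) l atTop) :
    Tendsto phi l (𝓝 0) := by
  have hg : Tendsto (fun x : ℝ => 2 * |x|⁻¹) l (𝓝 (2 * 0)) :=
    (tendsto_inv_atTop_zero.comp hl).const_mul 2
  rw [mul_zero] at hg
  refine squeeze_zero_norm' ?_ hg
  filter_upwards [hl.eventually_ge_atTop 1] with x hx
  rw [Real.norm_eq_abs, abs_of_nonneg (phi_nonneg x)]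
  have h1 := phi_bound hx
  have hxpos : 0 < |x| := lt_of_lt_of_le one_pos hx
  have hx2 : x ^ 2 = |x| ^ 2 := (sq_abs x).symm
  calc phi x ≤ 2 / x ^ 2 := h1
    _ ≤ 2 * |x|⁻¹ := by
        rw [div_eq_mul_inv]
        gcongr <;> nlinarith [sq_abs x]

lemma integral_Iic_sq_phi (m : ℝ) :
    ∫ x in Iic m, x ^ 2 * phi x = Phi m - m * phi m := by
  have hderiv : ∀ x ∈ Iic m, HasDerivAt (fun u => Phi u - u * phi u) (x ^ 2 * phi x) x := by
    intro x _
    have h := (hasDerivAt_Phi x).sub ((hasDerivAt_id x).mul (hasDerivAt_phi x))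
    refine h.congr_deriv ?_
    simp [id]
    ring
  have hbot : Tendsto (fun u => Phi u - u * phi u) atBot (𝓝 0) := by
    have := tendsto_Phi_atBot.sub (tendsto_mul_phi tendsto_abs_atBot_atTop)
    simpa using this
  have h := integral_Iic_of_hasDerivAt_of_tendsto' hderiv
    integrable_sq_phi.integrableOn hbot
  simpa using h

lemma integral_mul_phi_eq : ∫ x : ℝ, x * phi x = 0 := by
  have hderiv : ∀ x : ℝ, HasDerivAt (fun u : ℝ => -phi u) (x * phi x) x := by
    intro x
    have := (hasDerivAt_phi x).neg
    refine this.congr_deriv ?_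
    ring
  have h := integral_of_hasDerivAt_of_tendsto hderiv integrable_mul_phi
    (by simpa using (tendsto_phi tendsto_abs_atBot_atTop).neg)
    (by simpa using (tendsto_phi tendsto_abs_atTop_atTop).neg)
  simpa using h

lemma integral_sq_phi : ∫ x : ℝ, x ^ 2 * phi x = 1 := by
  have hderiv : ∀ x : ℝ, HasDerivAt (fun u => Phi u - u * phi u) (x ^ 2 * phi x) x := by
    intro x
    have h := (hasDerivAt_Phi x).sub ((hasDerivAt_id x).mul (hasDerivAt_phi x))
    refine h.congr_deriv ?_
    simp [id]
    ring
  have hbot : Tendsto (fun u => Phi u - u * phi u) atBot (𝓝 0) := by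
    simpa using tendsto_Phi_atBot.sub (tendsto_mul_phi tendsto_abs_atBot_atTop)
  have htop : Tendsto (fun u => Phi u - u * phi u) atTop (𝓝 1) := by
    simpa using tendsto_Phi_atTop.sub (tendsto_mul_phi tendsto_abs_atTop_atTop)
  have h := integral_of_hasDerivAt_of_tendsto hderiv integrable_sq_phi hbot htop
  simpa using h

-- scaled versions
lemma integral_phi_comp {r : ℝ} (hr : 0 < r) : ∫ t : ℝ, phi (r * t) = r⁻¹ := by
  rw [Measure.integral_comp_mul_left phi r, integral_phi, abs_of_pos (inv_pos.2 hr),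
    smul_eq_mul, mul_one]

lemma integral_mul_phi_comp {r : ℝ} (hr : 0 < r) : ∫ t : ℝ, t * phi (r * t) = 0 := by
  have key : ∀ t : ℝ, t * phi (r * t) = r⁻¹ * ((fun u => u * phi u) (r * t)) := by
    intro t
    simp only
    field_simp
  simp_rw [key]
  rw [integral_const_mul, Measure.integral_comp_mul_left (fun u => u * phi u) r,
    integral_mul_phi_eq, smul_zero, mul_zero]

lemma integral_sq_phi_comp {r : ℝ} (hr : 0 < r) : ∫ t : ℝ, t ^ 2 * phi (r * t) = r⁻¹ ^ 3 := by
  have key : ∀ t : ℝ, t ^ 2 * phi (r * t) = r⁻¹ ^ 2 * ((fun u => u ^ 2 * phi u) (r * t)) := by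
    intro t
    simp only
    field_simp
  simp_rw [key]
  rw [integral_const_mul, Measure.integral_comp_mul_left (fun u => u ^ 2 * phi u) r,
    integral_sq_phi, smul_eq_mul, mul_one, abs_of_pos (inv_pos.2 hr)]
  ring

lemma integrable_phi_comp {r : ℝ} (hr : r ≠ 0) : Integrable (fun t : ℝ => phi (r * t)) :=
  integrable_phi.comp_mul_left' hr

lemma integrable_mul_phi_comp {r : ℝ} (hr : r ≠ 0) :
    Integrable (fun t : ℝ => t * phi (r * t)) := by
  have h := (integrable_mul_phi.comp_mul_left' hr).const_mul r⁻¹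
  refine h.congr (ae_of_all _ fun t => ?_)
  simp only
  field_simp

lemma integrable_sq_phi_comp {r : ℝ} (hr : r ≠ 0) :
    Integrable (fun t : ℝ => t ^ 2 * phi (r * t)) := by
  have h := (integrable_sq_phi.comp_mul_left' hr).const_mul (r⁻¹ ^ 2)
  refine h.congr (ae_of_all _ fun t => ?_)
  simp only
  field_simp

lemma integral_shifted {r : ℝ} (hr : 0 < r) (μ : ℝ) :
    ∫ t : ℝ, t ^ 2 * phi (r * (t + μ)) = r⁻¹ ^ 3 + μ ^ 2 * r⁻¹ := by
  have h1 : ∫ t : ℝ, t ^ 2 * phi (r * (t + μ))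
      = ∫ t : ℝ, (t - μ) ^ 2 * phi (r * t) := by
    have h := MeasureTheory.integral_add_right_eq_self
      (μ := volume) (fun t : ℝ => (t - μ) ^ 2 * phi (r * t)) μ
    rw [← h]
    congr 1
    funext t
    simp [add_sub_cancel_right]
  rw [h1]
  have expand : ∀ t : ℝ, (t - μ) ^ 2 * phi (r * t)
      = t ^ 2 * phi (r * t) - (2 * μ) * (t * phi (r * t)) + μ ^ 2 * phi (r * t) := by
    intro t; ring
  simp_rw [expand]
  have e1 : ∫ (t : ℝ), (t ^ 2 * phi (r * t) - 2 * μ * (t * phi (r * t)) + μ ^ 2 * phi (r * t))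
      = (∫ (t : ℝ), (t ^ 2 * phi (r * t) - 2 * μ * (t * phi (r * t))))
        + ∫ (t : ℝ), μ ^ 2 * phi (r * t) :=
    integral_add ((integrable_sq_phi_comp hr.ne').sub
        ((integrable_mul_phi_comp hr.ne').const_mul (2 * μ)))
      ((integrable_phi_comp hr.ne').const_mul (μ ^ 2))
  have e2 : ∫ (t : ℝ), (t ^ 2 * phi (r * t) - 2 * μ * (t * phi (r * t)))
      = (∫ (t : ℝ), t ^ 2 * phi (r * t)) - ∫ (t : ℝ), 2 * μ * (t * phi (r * t)) :=
    integral_sub (integrable_sq_phi_comp hr.ne')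
      ((integrable_mul_phi_comp hr.ne').const_mul (2 * μ))
  rw [e1, e2, integral_sq_phi_comp hr, integral_const_mul, integral_mul_phi_comp hr,
    integral_const_mul, integral_phi_comp hr]
  ring

lemma phi_mul_phi {b r : ℝ} (hr2 : r ^ 2 = 1 + b ^ 2) (hr0 : 0 < r) (s t : ℝ) :
    phi t * phi (s + b * t) = phi (r⁻¹ * s) * phi (r * (t + b * s * (r⁻¹) ^ 2)) := by
  have hrne : r ≠ 0 := hr0.ne'
  unfold phi
  rw [div_mul_div_comm, div_mul_div_comm, ← Real.exp_add, ← Real.exp_add]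
  congr 2
  have h1 : (r⁻¹ * s) ^ 2 = s ^ 2 * (r ^ 2)⁻¹ := by
    rw [mul_pow, inv_pow]; ring
  have h2 : (r * (t + b * s * (r⁻¹) ^ 2)) ^ 2
      = r ^ 2 * (t + b * s * (r ^ 2)⁻¹) ^ 2 := by
    rw [mul_pow, inv_pow]
  rw [h1, h2, hr2]
  have hb2 : (1 : ℝ) + b ^ 2 ≠ 0 := by positivity
  field_simp
  ring

lemma Phi_eq_integral_shift (y a : ℝ) :
    ∫ s in Iic a, phi (s + y) = Phi (a + y) := by
  rw [← integral_indicator measurableSet_Iic]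
  have key : ∀ s : ℝ, (Iic a).indicator (fun s => phi (s + y)) s
      = (Iic (a + y)).indicator phi (s + y) := by
    intro s
    by_cases h : s ≤ a
    · rw [indicator_of_mem (mem_Iic.2 h), indicator_of_mem (mem_Iic.2 (by linarith))]
    · rw [indicator_of_notMem (by simpa using h),
        indicator_of_notMem (by simp only [mem_Iic, not_le] at h ⊢; linarith)]
  simp_rw [key]
  rw [MeasureTheory.integral_add_right_eq_self ((Iic (a + y)).indicator phi) y,
    integral_indicator measurableSet_Iic]
  rfl

lemma setIntegral_Iic_comp_mul (g : ℝ → ℝ) {c : ℝ} (hc : 0 < c) (a : ℝ) :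
    ∫ s in Iic a, g (c * s) = c⁻¹ * ∫ u in Iic (c * a), g u := by
  rw [← integral_indicator measurableSet_Iic, ← integral_indicator measurableSet_Iic]
  have key : ∀ s : ℝ, (Iic a).indicator (fun s => g (c * s)) s
      = (Iic (c * a)).indicator g (c * s) := by
    intro s
    by_cases h : s ≤ a
    · rw [indicator_of_mem (mem_Iic.2 h),
        indicator_of_mem (mem_Iic.2 (mul_le_mul_of_nonneg_left h hc.le))]
    · rw [indicator_of_notMem (by simpa using h),
        indicator_of_notMem (by
          simp only [mem_Iic, not_le] at h ⊢
          exact mul_lt_mul_of_pos_left h hc)]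
  simp_rw [key]
  rw [Measure.integral_comp_mul_left ((Iic (c * a)).indicator g) c,
    abs_of_pos (inv_pos.2 hc), smul_eq_mul]
set_option maxHeartbeats 1000000 in
theorem gaussian_cdf_second_moment (a b : ℝ) :
    ∫ t : ℝ, t ^ 2 * phi t * Phi (a + b * t)
      = Phi (a / Real.sqrt (1 + b ^ 2))
        - (a * b ^ 2 / (1 + b ^ 2) ^ ((3 : ℝ) / 2)) * phi (a / Real.sqrt (1 + b ^ 2)) := by
  have hb2 : (0:ℝ) < 1 + b ^ 2 := by positivity
  set r : ℝ := Real.sqrt (1 + b ^ 2) with hrdef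
  have hr : 0 < r := Real.sqrt_pos.2 hb2
  have hr2 : r ^ 2 = 1 + b ^ 2 := Real.sq_sqrt hb2.le
  set c : ℝ := r⁻¹ with hcdef
  have hc : 0 < c := inv_pos.2 hr
  have hc2 : c ^ 2 * (1 + b ^ 2) = 1 := by
    rw [hcdef, inv_pow, ← hr2]
    exact inv_mul_cancel₀ (by positivity)
  set F : ℝ → ℝ → ℝ := fun t s => t ^ 2 * phi t * phi (s + b * t) with hF
  have hFnonneg : ∀ t s : ℝ, 0 ≤ F t s := fun t s =>
    mul_nonneg (mul_nonneg (sq_nonneg t) (phi_nonneg t)) (phi_nonneg _)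
  have step1 : ∀ t : ℝ, t ^ 2 * phi t * Phi (a + b * t) = ∫ s in Iic a, F t s := by
    intro t
    simp only [hF]
    rw [integral_const_mul, Phi_eq_integral_shift (b * t) a]
  have inner : ∀ s : ℝ, (∫ t : ℝ, F t s)
      = c ^ 3 * phi (c * s) + b ^ 2 * c ^ 5 * (s ^ 2 * phi (c * s)) := by
    intro s
    have key : ∀ t : ℝ, F t s
        = phi (c * s) * (t ^ 2 * phi (r * (t + b * s * c ^ 2))) := by
      intro t
      simp only [hF]
      rw [mul_assoc, phi_mul_phi hr2 hr s t, ← hcdef]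
      ring
    simp_rw [key]
    rw [integral_const_mul, integral_shifted hr (b * s * c ^ 2), ← hcdef]
    ring
  have hFcont : Continuous (Function.uncurry F) := by
    show Continuous fun p : ℝ × ℝ => p.1 ^ 2 * phi p.1 * phi (p.2 + b * p.1)
    exact ((continuous_fst.pow 2).mul (continuous_phi.comp continuous_fst)).mul
      (continuous_phi.comp (continuous_snd.add (continuous_const.mul continuous_fst)))
  have hFint : Integrable (Function.uncurry F) (volume.prod (volume.restrict (Iic a))) := by
    rw [integrable_prod_iff hFcont.aestronglyMeasurable]
    constructor
    · refine ae_of_all _ fun t => ?_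
      have htrans : Integrable (fun s : ℝ => phi (s + b * t)) := by
        have h : Integrable (phi ∘ fun s : ℝ => s + b * t) volume := by
          rw [(measurePreserving_add_right (volume : Measure ℝ) (b * t)).integrable_comp_emb
            (MeasurableEquiv.addRight (b * t)).measurableEmbedding]
          exact integrable_phi
        exact h
      have goal' : Integrable (fun s : ℝ => t ^ 2 * phi t * phi (s + b * t))
          (volume.restrict (Iic a)) := (htrans.const_mul _).integrableOn
      simpa only [Function.uncurry_apply_pair, hF] using goal'
    · have heq : (fun t => ∫ s in Iic a, ‖Function.uncurry F (t, s)‖)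
          = fun t => t ^ 2 * phi t * Phi (a + b * t) := by
        funext t
        simp only [Function.uncurry_apply_pair]
        rw [show (fun s => ‖F t s‖) = fun s => F t s from
          funext fun s => Real.norm_of_nonneg (hFnonneg t s)]
        exact (step1 t).symm
      rw [heq]
      refine integrable_sq_phi.mono' ?_ (ae_of_all _ fun t => ?_)
      · exact (((continuous_pow 2).mul continuous_phi).mul
          (continuous_Phi.comp (continuous_const.add
            (continuous_const.mul continuous_id)))).aestronglyMeasurable
      · rw [Real.norm_eq_abs, abs_of_nonneg (mul_nonneg (mul_nonneg (sq_nonneg t)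
          (phi_nonneg t)) (Phi_nonneg _))]
        calc t ^ 2 * phi t * Phi (a + b * t) ≤ t ^ 2 * phi t * 1 :=
              mul_le_mul_of_nonneg_left (Phi_le_one _)
                (mul_nonneg (sq_nonneg t) (phi_nonneg t))
          _ = t ^ 2 * phi t := mul_one _
  have hsq_int : Integrable (fun s : ℝ => s ^ 2 * phi (c * s)) := integrable_sq_phi_comp hc.ne'
  have sqcomp : ∫ s in Iic a, s ^ 2 * phi (c * s)
      = c⁻¹ ^ 2 * (c⁻¹ * (Phi (c * a) - (c * a) * phi (c * a))) := by
    have key : ∀ s : ℝ, s ^ 2 * phi (c * s)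
        = c⁻¹ ^ 2 * ((fun u => u ^ 2 * phi u) (c * s)) := by
      intro s
      simp only
      field_simp
    simp_rw [key]
    rw [integral_const_mul, setIntegral_Iic_comp_mul (fun u => u ^ 2 * phi u) hc a,
      integral_Iic_sq_phi]
  have phicomp : ∫ s in Iic a, phi (c * s) = c⁻¹ * Phi (c * a) := by
    rw [setIntegral_Iic_comp_mul phi hc a]
    rfl
  have ham : a / r = c * a := by
    rw [div_eq_mul_inv, ← hcdef, mul_comm]
  have h32 : ((1:ℝ) + b ^ 2) ^ ((3:ℝ)/2) = r ^ 3 := by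
    rw [hrdef, Real.sqrt_eq_rpow, ← Real.rpow_natCast ((1 + b ^ 2) ^ ((1:ℝ)/2)) 3,
      ← Real.rpow_mul hb2.le]
    norm_num
  calc ∫ t : ℝ, t ^ 2 * phi t * Phi (a + b * t)
      = ∫ t : ℝ, ∫ s in Iic a, F t s := integral_congr_ae (ae_of_all _ step1)
    _ = ∫ s in Iic a, ∫ t : ℝ, F t s := integral_integral_swap hFint
    _ = ∫ s in Iic a, (c ^ 3 * phi (c * s) + b ^ 2 * c ^ 5 * (s ^ 2 * phi (c * s))) :=
        integral_congr_ae (ae_of_all _ fun s => inner s)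
    _ = c ^ 3 * (∫ s in Iic a, phi (c * s))
        + b ^ 2 * c ^ 5 * (∫ s in Iic a, s ^ 2 * phi (c * s)) := by
        rw [integral_add (((integrable_phi_comp hc.ne').const_mul _).integrableOn)
          ((hsq_int.const_mul _).integrableOn), integral_const_mul, integral_const_mul]
    _ = c ^ 3 * (c⁻¹ * Phi (c * a))
        + b ^ 2 * c ^ 5 * (c⁻¹ ^ 2 * (c⁻¹ * (Phi (c * a) - (c * a) * phi (c * a)))) := by
        rw [phicomp, sqcomp]
    _ = Phi (a / r) - (a * b ^ 2 / (1 + b ^ 2) ^ ((3:ℝ)/2)) * phi (a / r) := by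
        rw [ham, h32, show r = c⁻¹ by rw [hcdef, inv_inv]]
        field_simp
        linear_combination (Phi (c * a)) * hc2
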